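/- Let r ≥ 1 and let M be a structure in the first-order language of graphs that is elementarily equivalent to the shift graph Sh_r(ℕ), with underlying set of infinite cardinality λ. Then M embeds as an induced subgraph into the symmetric shift graph Sh_r^{sym}(A) for some set A of cardinality λ: there is an injective map f from M into the vertices of Sh_r^{sym}(A) such that M ⊨ E(x, y) if and only if f(x) and f(y) are adjacent in Sh_r^{sym}(A). -/

import Mathlib

open Cardinal

/-- `t` is the shift of `s`: `s_i = t_{i-1}` for all `1 ≤ i ≤ r-1`. -/
def IsShiftOf {A : Type} {r : ℕ} (s t : Fin r → A) : Prop :=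
  ∀ (i : ℕ) (h : i + 1 < r), s ⟨i + 1, h⟩ = t ⟨i, Nat.lt_of_succ_lt h⟩

/-- The shift graph `Sh_r(A)` on a linear order `A`: vertices are strictly increasing
`r`-tuples from `A`, and distinct vertices `s, t` are adjacent iff one is the shift
of the other. -/
def ShiftGraph (A : Type) [LinearOrder A] (r : ℕ) :
    SimpleGraph {s : Fin r → A // StrictMono s} where
  Adj s t := s ≠ t ∧ (IsShiftOf s.1 t.1 ∨ IsShiftOf t.1 s.1)
  symm := by
    constructor
    rintro s t ⟨hne, h⟩
    exact ⟨hne.symm, h.symm⟩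
  loopless := by
    constructor
    rintro s ⟨hne, -⟩
    exact hne rfl

/-- The symmetric shift graph `Sh_r^sym(A)` on a set `A`: vertices are `r`-tuples of
pairwise distinct elements of `A`, and distinct vertices `s, t` are adjacent iff one
is the shift of the other. -/
def SymShiftGraph (A : Type) (r : ℕ) :
    SimpleGraph {s : Fin r → A // Function.Injective s} where
  Adj s t := s ≠ t ∧ (IsShiftOf s.1 t.1 ∨ IsShiftOf t.1 s.1)
  symm := by
    constructor
    rintro s t ⟨hne, h⟩
    exact ⟨hne.symm, h.symm⟩
  loopless := by
    constructor
    rintro s ⟨hne, -⟩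
    exact hne rfl

open FirstOrder FirstOrder.Language

namespace Stmt12Aux

def SAdj {A : Type} {r : ℕ} (s t : Fin r → A) : Prop :=
  s ≠ t ∧ (IsShiftOf s t ∨ IsShiftOf t s)

def SLFun (M : Type) (r : ℕ) : ℕ → Type := fun n =>
  Nat.casesOn n M fun m => Nat.casesOn m (Fin r) fun _ => Empty

def SLRel : ℕ → Type := fun n =>
  Nat.casesOn n Empty fun m => Nat.casesOn m Empty fun k => Nat.casesOn k Unit fun _ => Empty

def SL (M : Type) (r : ℕ) : Language := ⟨SLFun M r, SLRel⟩

variable {M : Type} {r : ℕ}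

def Erel (M : Type) (r : ℕ) : (SL M r).Relations 2 := Unit.unit

def cterm (x : M) {n : ℕ} : (SL M r).Term (Empty ⊕ Fin n) :=
  Constants.term x

def fterm (i : Fin r) {n : ℕ} (t : (SL M r).Term (Empty ⊕ Fin n)) :
    (SL M r).Term (Empty ⊕ Fin n) :=
  Functions.apply₁ (show (SL M r).Functions 1 from i) t

variable (M r) {N : Type} [(SL M r).Structure N]

def tupN (a : N) : Fin r → N := fun i =>
  Structure.funMap (show (SL M r).Functions 1 from i) ![a]

def cmapN (x : M) : N := Structure.funMap (show (SL M r).Functions 0 from x) default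

variable {M r}

@[simp] lemma realize_fterm (i : Fin r) {n : ℕ} (t : (SL M r).Term (Empty ⊕ Fin n))
    (v : Empty ⊕ Fin n → N) : (fterm i t).realize v = tupN M r (t.realize v) i := by
  simp [fterm, tupN, Term.realize_functions_apply₁]
  exact Term.realize_functions_apply₁

@[simp] lemma realize_cterm (x : M) {n : ℕ} (v : Empty ⊕ Fin n → N) :
    (cterm (r := r) x).realize v = cmapN M r x := by
  simp [cterm, cmapN, Term.realize_constants]
  exact Term.realize_constants

end Stmt12Aux
namespace Stmt12Aux
variable {M : Type} {r : ℕ}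

/-- `∀ v, tuple of v is injective` -/
noncomputable def S1 (M : Type) (r : ℕ) : (SL M r).Sentence :=
  BoundedFormula.all (BoundedFormula.iInf fun (p : Fin r × Fin r) =>
    if p.1 = p.2 then ⊤ else ∼(Term.bdEqual (fterm p.1 &0) (fterm p.2 &0)))

noncomputable def eqTup (M : Type) (r : ℕ) : (SL M r).BoundedFormula Empty 2 :=
  BoundedFormula.iInf fun (i : Fin r) =>
    Term.bdEqual (fterm i &0) (fterm i &1)

noncomputable def S2 (M : Type) (r : ℕ) : (SL M r).Sentence :=
  BoundedFormula.all (BoundedFormula.all ((eqTup M r).imp (Term.bdEqual &0 &1)))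

noncomputable def shiftFml (M : Type) (r : ℕ) (a b : Fin 2) : (SL M r).BoundedFormula Empty 2 :=
  BoundedFormula.iInf fun (i : Fin r) =>
    if h : (i : ℕ) + 1 < r then
      Term.bdEqual (fterm ⟨(i : ℕ) + 1, h⟩ (Term.var (Sum.inr a))) (fterm i (Term.var (Sum.inr b)))
    else ⊤

noncomputable def S3 (M : Type) (r : ℕ) : (SL M r).Sentence :=
  BoundedFormula.all (BoundedFormula.all (BoundedFormula.iff
    ((Erel M r).boundedFormula₂ &0 &1)
    (∼(eqTup M r) ⊓ (shiftFml M r 0 1 ⊔ shiftFml M r 1 0))))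

variable {N : Type} [(SL M r).Structure N]

lemma realize_eqTup {v : Empty → N} {xs : Fin 2 → N} :
    (eqTup M r).Realize v xs ↔ tupN M r (xs 0) = tupN M r (xs 1) := by
  simp [eqTup, funext_iff]

lemma realize_shiftFml {a b : Fin 2} {v : Empty → N} {xs : Fin 2 → N} :
    (shiftFml M r a b).Realize v xs ↔ IsShiftOf (tupN M r (xs a)) (tupN M r (xs b)) := by
  simp only [shiftFml, BoundedFormula.realize_iInf, Finset.mem_univ, forall_true_left]
  constructor
  · intro h i hi
    have := h ⟨i, Nat.lt_of_succ_lt hi⟩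
    rw [dif_pos hi] at this
    simpa using this
  · intro h i
    split_ifs with hi
    · simpa using h i hi
    · simp

lemma realize_S1 : N ⊨ S1 M r ↔ ∀ a : N, Function.Injective (tupN M r a) := by
  simp only [Sentence.Realize, S1, Formula.Realize, BoundedFormula.realize_all,
    BoundedFormula.realize_iInf, Finset.mem_univ, forall_true_left, Prod.forall]
  constructor
  · intro h a i j hij
    by_contra hne
    have := h a i j
    rw [if_neg hne] at this
    simp at this
    exact this (by simpa [Fin.snoc] using hij)
  · intro h a i j
    split_ifs with hij
    · simp
    · simp only [BoundedFormula.realize_not, BoundedFormula.realize_bdEqual, realize_fterm]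
      intro hc
      exact hij ((h a) (by simpa [Fin.snoc] using hc))

lemma realize_S2 : N ⊨ S2 M r ↔ Function.Injective (tupN M r : N → Fin r → N) := by
  simp only [Sentence.Realize, S2, Formula.Realize, BoundedFormula.realize_all,
    BoundedFormula.realize_imp, realize_eqTup, BoundedFormula.realize_bdEqual]
  constructor
  · intro h a b hab
    have := h a b
    simpa [Fin.snoc] using this (by simpa [Fin.snoc] using hab)
  · intro h a b
    intro hab
    simp only [Fin.snoc] at hab ⊢
    simpa [Fin.snoc] using h (by simpa [Fin.snoc] using hab)

lemma realize_S3 : N ⊨ S3 M r ↔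
    ∀ a b : N, Structure.RelMap (Erel M r) ![a, b] ↔ SAdj (tupN M r a) (tupN M r b) := by
  simp only [Sentence.Realize, S3, Formula.Realize, BoundedFormula.realize_all,
    BoundedFormula.realize_iff, BoundedFormula.realize_inf, BoundedFormula.realize_sup,
    BoundedFormula.realize_not, BoundedFormula.realize_rel₂, realize_eqTup,
    realize_shiftFml]
  constructor
  · intro h a b
    have := h a b
    simpa [Fin.snoc, SAdj] using this
  · intro h a b
    simpa [Fin.snoc, SAdj] using h a b

end Stmt12Aux
namespace Stmt12Aux
variable {M : Type} {r : ℕ}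

open scoped Classical in
/-- diagram sentence for the pair `p` -/
noncomputable def dsent (r : ℕ) (SM : Language.graph.Structure M) (p : M × M) :
    (SL M r).Sentence :=
  (if @Structure.RelMap Language.graph M SM 2 adj ![p.1, p.2]
    then (Erel M r).boundedFormula₂ (cterm p.1) (cterm p.2)
    else ∼((Erel M r).boundedFormula₂ (cterm p.1) (cterm p.2))) ⊓
  (if p.1 = p.2 then ⊤ else ∼(Term.bdEqual (cterm p.1) (cterm p.2)))

variable {N : Type} [(SL M r).Structure N]

lemma realize_dsent {SM : Language.graph.Structure M} {p : M × M} :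
    N ⊨ dsent r SM p ↔
      ((Structure.RelMap (Erel M r) ![(cmapN M r p.1 : N), cmapN M r p.2] ↔
          @Structure.RelMap Language.graph M SM 2 adj ![p.1, p.2]) ∧
        (p.1 ≠ p.2 → (cmapN M r p.1 : N) ≠ cmapN M r p.2)) := by
  simp only [Sentence.Realize, dsent, Formula.Realize, BoundedFormula.realize_inf]
  constructor
  · rintro ⟨h1, h2⟩
    constructor
    · split_ifs at h1 with hM
      · simp only [BoundedFormula.realize_rel₂, realize_cterm] at h1
        exact iff_of_true h1 hM
      · simp only [BoundedFormula.realize_not, BoundedFormula.realize_rel₂, realize_cterm] at h1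
        exact iff_of_false h1 hM
    · intro hne
      rw [if_neg hne] at h2
      simpa using h2
  · rintro ⟨h1, h2⟩
    constructor
    · split_ifs with hM
      · simp only [BoundedFormula.realize_rel₂, realize_cterm]
        exact h1.2 hM
      · simp only [BoundedFormula.realize_not, BoundedFormula.realize_rel₂, realize_cterm]
        exact fun hc => hM (h1.1 hc)
    · split_ifs with he
      · simp
      · simpa using h2 he

noncomputable def Tstr (M : Type) (r : ℕ) : (SL M r).Theory := {S1 M r, S2 M r, S3 M r}

noncomputable def Tfull (r : ℕ) (SM : Language.graph.Structure M) : (SL M r).Theory :=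
  Tstr M r ∪ Set.range (dsent r SM)

open scoped Classical in
/-- the pattern formula in the language of graphs -/
noncomputable def patFml (n : ℕ) (adjP : Fin n → Fin n → Prop) :
    Language.graph.BoundedFormula Empty n :=
  BoundedFormula.iInf fun (p : Fin n × Fin n) =>
    if p.1 = p.2 then ⊤ else
      (∼(Term.bdEqual (Term.var (Sum.inr p.1)) (Term.var (Sum.inr p.2))) ⊓
        (if adjP p.1 p.2 then adj.boundedFormula₂ (Term.var (Sum.inr p.1)) (Term.var (Sum.inr p.2))
          else ∼(adj.boundedFormula₂ (Term.var (Sum.inr p.1)) (Term.var (Sum.inr p.2)))))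

lemma realize_patFml {V : Type} [Language.graph.Structure V] {n : ℕ}
    {adjP : Fin n → Fin n → Prop} {v : Empty → V} {xs : Fin n → V} :
    (patFml n adjP).Realize v xs ↔ ∀ j k : Fin n, j ≠ k →
      (xs j ≠ xs k ∧ (Structure.RelMap adj ![xs j, xs k] ↔ adjP j k)) := by
  simp only [patFml, BoundedFormula.realize_iInf, Finset.mem_univ, forall_true_left, Prod.forall]
  constructor
  · intro h j k hne
    have := h j k
    rw [if_neg hne] at this
    rw [BoundedFormula.realize_inf] at this
    refine ⟨by simpa using this.1, ?_⟩
    have h2 := this.2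
    split_ifs at h2 with hA
    · simp only [BoundedFormula.realize_rel₂] at h2
      exact iff_of_true (by simpa using h2) hA
    · simp only [BoundedFormula.realize_not, BoundedFormula.realize_rel₂] at h2
      exact iff_of_false (by simpa using h2) hA
  · intro h j k
    split_ifs with hne hA
    · simp
    · rw [BoundedFormula.realize_inf]
      refine ⟨by simpa using (h j k hne).1, ?_⟩
      simp only [BoundedFormula.realize_rel₂]
      simpa using (h j k hne).2.2 hA
    · rw [BoundedFormula.realize_inf]
      refine ⟨by simpa using (h j k hne).1, ?_⟩
      simp only [BoundedFormula.realize_not, BoundedFormula.realize_rel₂]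
      simpa using fun hc => hA ((h j k hne).2.1 hc)

end Stmt12Aux
namespace Stmt12Aux
variable {M : Type} {r : ℕ}

def mkStr (cc : M → ℕ) (ff : Fin r → ℕ → ℕ) : (SL M r).Structure ℕ where
  funMap {n} f xs :=
    match n, f with
    | 0, x => cc x
    | 1, i => ff i (xs 0)
    | _ + 2, f => Empty.elim f
  RelMap {n} R xs :=
    match n, R with
    | 0, R => Empty.elim R
    | 1, R => Empty.elim R
    | 2, _ => SAdj (fun i => ff i (xs 0)) (fun i => ff i (xs 1))
    | _ + 3, R => Empty.elim R

lemma mkStr_tupN (cc : M → ℕ) (ff : Fin r → ℕ → ℕ) (a : ℕ) :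
    @tupN M r ℕ (mkStr cc ff) a = fun i => ff i a := rfl

lemma mkStr_cmapN (cc : M → ℕ) (ff : Fin r → ℕ → ℕ) (x : M) :
    @cmapN M r ℕ (mkStr cc ff) x = cc x := rfl

lemma mkStr_rel (cc : M → ℕ) (ff : Fin r → ℕ → ℕ) (a b : ℕ) :
    Structure.RelMap (self := mkStr cc ff) (Erel M r) ![a, b] =
      SAdj (fun i => ff i a) (fun i => ff i b) := rfl

end Stmt12Aux

namespace Stmt12Aux
variable {M : Type} {r : ℕ}

lemma relMap_adj_iff {V : Type} (G : SimpleGraph V) (a b : V) :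
    @Structure.RelMap Language.graph V G.structure 2 adj ![a, b] ↔ G.Adj a b := Iff.rfl

lemma finSat (hr : 1 ≤ r) (SM : Language.graph.Structure M)
    (hirr : ∀ x : M, ¬ @Structure.RelMap Language.graph M SM 2 adj ![x, x])
    (heq : @ElementarilyEquivalent Language.graph M {s : Fin r → ℕ // StrictMono s}
      SM (ShiftGraph ℕ r).structure)
    (S : Finset M) :
    (Tstr M r ∪ dsent r SM '' {p : M × M | p.1 ∈ S ∧ p.2 ∈ S}).IsSatisfiable := by
  classical
  letI := SM
  letI := (ShiftGraph ℕ r).structure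
  set n := S.card with hn
  set e : {x // x ∈ S} ≃ Fin n := S.equivFin with he
  set adjP : Fin n → Fin n → Prop := fun j k =>
    Structure.RelMap (L := Language.graph) adj ![((e.symm j : M)), ((e.symm k : M))] with hadjP
  -- the pattern is realized in M
  have hM : M ⊨ (patFml n adjP).exs := by
    rw [Sentence.Realize, BoundedFormula.realize_exs]
    refine ⟨fun j => (e.symm j : M), realize_patFml.2 fun j k hjk => ?_⟩
    refine ⟨fun hc => hjk ?_, Iff.rfl⟩
    exact e.symm.injective (Subtype.val_injective hc)
  -- so it is realized in the shift graph
  have hSh := (heq.realize_sentence _).1 hM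
  rw [Sentence.Realize, BoundedFormula.realize_exs] at hSh
  obtain ⟨s, hs0⟩ := hSh
  rw [realize_patFml] at hs0
  have hs : ∀ j k : Fin n, j ≠ k →
      s j ≠ s k ∧ ((ShiftGraph ℕ r).Adj (s j) (s k) ↔ adjP j k) := hs0
  -- build a model with universe ℕ
  set B : ℕ := (Finset.univ.sup fun q : Fin n × Fin r => (s q.1).1 q.2) + 1 with hB
  have hcoord : ∀ (j : Fin n) (i : Fin r), (s j).1 i < B :=
    fun j i => Nat.lt_succ_of_le (Finset.le_sup (f := fun q : Fin n × Fin r => (s q.1).1 q.2) (Finset.mem_univ (j, i)))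
  set cc : M → ℕ := fun x => if h : x ∈ S then ((e ⟨x, h⟩ : Fin n) : ℕ) else 0 with hcc
  set ff : Fin r → ℕ → ℕ :=
    (fun i m => if h : m < n then (s ⟨m, h⟩).1 i else B + r * m + (i : ℕ)) with hff
  letI Nstr : (SL M r).Structure ℕ := mkStr cc ff
  have hr0 : 0 < r := hr
  have hffb : ∀ (i : Fin r) (m : ℕ), ¬ m < n → ff i m = B + r * m + (i : ℕ) := by
    intro i m hm; simp only [hff, dif_neg hm]
  have hffa : ∀ (i : Fin r) (m : ℕ) (h : m < n), ff i m = (s ⟨m, h⟩).1 i := by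
    intro i m hm; simp only [hff, dif_pos hm]
  have key : ∀ (x : M) (hx : x ∈ S), (fun i => ff i (cc x)) = (s (e ⟨x, hx⟩)).1 := by
    intro x hx
    have hccx : cc x = ((e ⟨x, hx⟩ : Fin n) : ℕ) := by simp only [hcc, dif_pos hx]
    have hlt : cc x < n := by rw [hccx]; exact (e ⟨x, hx⟩).isLt
    have hfin : (⟨cc x, hlt⟩ : Fin n) = e ⟨x, hx⟩ := by
      apply Fin.ext
      simpa using hccx
    funext i
    rw [hffa i _ hlt, hfin]
  have hmodel : ℕ ⊨ (Tstr M r ∪ dsent r SM '' {p : M × M | p.1 ∈ S ∧ p.2 ∈ S}) := by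
    rw [Theory.model_iff]
    intro φ hφ
    rcases hφ with hφ | ⟨p, hp, rfl⟩
    · rcases hφ with rfl | rfl | rfl
      · -- S1
        rw [realize_S1]
        intro a i j hij
        rw [mkStr_tupN] at hij
        replace hij : ff i a = ff j a := hij
        by_cases ha : a < n
        · rw [hffa i a ha, hffa j a ha] at hij
          exact (s ⟨a, ha⟩).2.injective hij
        · rw [hffb i a ha, hffb j a ha] at hij
          apply Fin.ext
          omega
      · -- S2
        rw [realize_S2]
        intro a b hab
        rw [mkStr_tupN, mkStr_tupN] at hab
        by_cases ha : a < n <;> by_cases hb : b < n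
        · have hsab : s ⟨a, ha⟩ = s ⟨b, hb⟩ := by
            apply Subtype.ext
            funext i
            have hco : ff i a = ff i b := congrFun hab i
            rwa [hffa i a ha, hffa i b hb] at hco
          by_contra hne
          have hne' : (⟨a, ha⟩ : Fin n) ≠ ⟨b, hb⟩ := fun h => hne (Fin.mk.inj_iff.1 h)
          exact ((hs _ _ hne').1) hsab
        · have hco : ff ⟨0, hr0⟩ a = ff ⟨0, hr0⟩ b := congrFun hab _
          rw [hffa _ a ha, hffb _ b hb] at hco
          have hlt : (s ⟨a, ha⟩).1 ⟨0, hr0⟩ < B := hcoord _ _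
          omega
        · have hco : ff ⟨0, hr0⟩ a = ff ⟨0, hr0⟩ b := congrFun hab _
          rw [hffb _ a ha, hffa _ b hb] at hco
          have hlt : (s ⟨b, hb⟩).1 ⟨0, hr0⟩ < B := hcoord _ _
          omega
        · have hco : ff ⟨0, hr0⟩ a = ff ⟨0, hr0⟩ b := congrFun hab _
          rw [hffb _ a ha, hffb _ b hb] at hco
          have : r * a = r * b := by omega
          exact Nat.eq_of_mul_eq_mul_left hr0 this
      · -- S3
        rw [realize_S3]
        intro a b
        rw [mkStr_rel, mkStr_tupN, mkStr_tupN]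
    · -- diagram sentences
      rw [realize_dsent]
      obtain ⟨hp1, hp2⟩ := hp
      constructor
      · rw [mkStr_cmapN, mkStr_cmapN, mkStr_rel]
        by_cases hxy : p.1 = p.2
        · refine iff_of_false (fun h => h.1 ?_) (hxy ▸ hirr p.1)
          rw [hxy]
        · have hjk : e ⟨p.1, hp1⟩ ≠ e ⟨p.2, hp2⟩ := by
            intro h
            exact hxy (Subtype.mk.injEq _ _ _ _ ▸ (e.injective h))
          obtain ⟨hnev, hadj⟩ := hs _ _ hjk
          rw [key p.1 hp1, key p.2 hp2]
          have hshadj : SAdj (s (e ⟨p.1, hp1⟩)).1 (s (e ⟨p.2, hp2⟩)).1 ↔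
              (ShiftGraph ℕ r).Adj (s (e ⟨p.1, hp1⟩)) (s (e ⟨p.2, hp2⟩)) := by
            constructor
            · rintro ⟨h1, h2⟩
              exact ⟨fun hc => h1 (congrArg Subtype.val hc), h2⟩
            · rintro ⟨h1, h2⟩
              exact ⟨fun hc => h1 (Subtype.ext hc), h2⟩
          rw [hshadj, hadj, hadjP]
          simp only [Equiv.symm_apply_apply]
      · intro hne h
        rw [mkStr_cmapN, mkStr_cmapN] at h
        simp only [hcc, dif_pos hp1, dif_pos hp2] at h
        have := e.injective (Fin.ext h)
        exact hne (Subtype.mk.injEq _ _ _ _ ▸ this)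
  exact ⟨@Theory.ModelType.of _ _ ℕ Nstr hmodel ⟨0⟩⟩

end Stmt12Aux
namespace Stmt12Aux
variable {M : Type} {r : ℕ}

lemma Tfull_isSat (hr : 1 ≤ r) (SM : Language.graph.Structure M) [Nonempty M]
    (hirr : ∀ x : M, ¬ @Structure.RelMap Language.graph M SM 2 adj ![x, x])
    (heq : @ElementarilyEquivalent Language.graph M {s : Fin r → ℕ // StrictMono s}
      SM (ShiftGraph ℕ r).structure) :
    (Tfull r SM).IsSatisfiable := by
  classical
  rw [Theory.isSatisfiable_iff_isFinitelySatisfiable]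
  intro T0 hT0
  set pick : (SL M r).Sentence → M × M := fun t =>
    if h : ∃ p : M × M, dsent r SM p = t then h.choose
    else (Classical.arbitrary M, Classical.arbitrary M) with hpick
  set P : Finset (M × M) := T0.image pick with hP
  set S : Finset M := P.image Prod.fst ∪ P.image Prod.snd with hS
  have hsub : ↑T0 ⊆ Tstr M r ∪ dsent r SM '' {p : M × M | p.1 ∈ S ∧ p.2 ∈ S} := by
    intro t ht
    rcases hT0 ht with h | h
    · exact Or.inl h
    · obtain ⟨p, hp⟩ := h
      have hex : ∃ q : M × M, dsent r SM q = t := ⟨p, hp⟩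
      have hPt : pick t ∈ P := Finset.mem_image.2 ⟨t, ht, rfl⟩
      refine Or.inr ⟨pick t, ⟨?_, ?_⟩, ?_⟩
      · exact Finset.mem_union_left _ (Finset.mem_image.2 ⟨pick t, hPt, rfl⟩)
      · exact Finset.mem_union_right _ (Finset.mem_image.2 ⟨pick t, hPt, rfl⟩)
      · simp only [hpick, dif_pos hex]
        exact hex.choose_spec
  exact (finSat hr SM hirr heq S).mono hsub

lemma card_SL_le {lam : Cardinal} (hlam : ℵ₀ ≤ lam) (hcard : #M = lam) :
    (SL M r).card ≤ lam := by
  rw [Language.card_eq_card_functions_add_card_relations]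
  have haux : ∀ f : ℕ → Cardinal, (∀ l, f l ≤ lam) → Cardinal.sum f ≤ lam := by
    intro f hf
    calc Cardinal.sum f ≤ Cardinal.sum (fun _ : ℕ => lam) := Cardinal.sum_le_sum _ _ hf
      _ = #ℕ * lam := Cardinal.sum_const' _ _
      _ ≤ lam * lam := by
          refine mul_le_mul' ?_ le_rfl
          simpa using hlam
      _ = lam := Cardinal.mul_eq_self hlam
  refine Cardinal.add_le_of_le hlam (haux _ ?_) (haux _ ?_)
  · intro l
    match l with
    | 0 => simpa [SL, SLFun] using le_of_eq hcard
    | 1 =>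
      refine le_trans ?_ hlam
      simpa [SL, SLFun] using Cardinal.mk_le_aleph0
    | (l + 2) => simp [SL, SLFun]
  · intro l
    match l with
    | 0 => simp [SL, SLRel]
    | 1 => simp [SL, SLRel]
    | 2 =>
      have e : ((SL M r).Relations 2) = Unit := rfl
      rw [e]
      simpa using le_trans Cardinal.one_le_aleph0 hlam
    | (l + 3) => simp [SL, SLRel]

end Stmt12Aux

open Stmt12Aux

theorem stmt_12 (r : ℕ) (hr : 1 ≤ r) (M : Type) (SM : Language.graph.Structure M)
    (lam : Cardinal) (hlam : ℵ₀ ≤ lam) (hcard : #M = lam)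
    (heq : @ElementarilyEquivalent Language.graph M {s : Fin r → ℕ // StrictMono s}
      SM (ShiftGraph ℕ r).structure) :
    ∃ A : Type, #A = lam ∧
      ∃ f : M → {s : Fin r → A // Function.Injective s},
        Function.Injective f ∧
        ∀ x y : M,
          (@Structure.RelMap Language.graph M SM 2 adj ![x, y]) ↔
            (SymShiftGraph A r).Adj (f x) (f y) := by
  classical
  letI := SM
  letI := (ShiftGraph ℕ r).structure
  haveI hMinf : Infinite M := by
    rw [Cardinal.infinite_iff, hcard]; exact hlam
  have hsg : M ⊨ Theory.simpleGraph := heq.symm.theory_model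
  rw [Theory.simpleGraph_model_iff] at hsg
  have hirr : ∀ x : M, ¬ @Structure.RelMap Language.graph M SM 2 adj ![x, x] :=
    fun x => hsg.1.irrefl x
  have hsat := Tfull_isSat hr SM hirr heq
  obtain ⟨N0⟩ := hsat
  have hN0inf : Infinite N0 := by
    refine Infinite.of_injective (fun x : M => (cmapN M r x : N0)) ?_
    intro x y hxy
    by_contra hne
    have hd := Theory.realize_sentence_of_mem (M := N0) (Tfull r SM)
      (show dsent r SM (x, y) ∈ Tfull r SM from Or.inr ⟨(x, y), rfl⟩)
    rw [realize_dsent] at hd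
    exact hd.2 hne hxy
  obtain ⟨N, hNcard⟩ := Theory.exists_model_card_eq ⟨N0, hN0inf⟩ lam hlam
    (by simpa using card_SL_le hlam hcard)
  have hS1 := (realize_S1 (N := N)).1 (Theory.realize_sentence_of_mem (M := N) (Tfull r SM)
    (Or.inl (by simp [Tstr])))
  have hS2 := (realize_S2 (N := N)).1 (Theory.realize_sentence_of_mem (M := N) (Tfull r SM)
    (Or.inl (by simp [Tstr])))
  have hS3 := (realize_S3 (N := N)).1 (Theory.realize_sentence_of_mem (M := N) (Tfull r SM)
    (Or.inl (by simp [Tstr])))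
  have hD : ∀ p : M × M,
      ((Structure.RelMap (Erel M r) ![(cmapN M r p.1 : N), cmapN M r p.2] ↔
          @Structure.RelMap Language.graph M SM 2 adj ![p.1, p.2]) ∧
        (p.1 ≠ p.2 → (cmapN M r p.1 : N) ≠ cmapN M r p.2)) :=
    fun p => realize_dsent.1 (Theory.realize_sentence_of_mem (M := N) (Tfull r SM)
      (Or.inr ⟨p, rfl⟩))
  refine ⟨N, hNcard, fun x => ⟨tupN M r (cmapN M r x), hS1 _⟩, ?_, ?_⟩
  · intro x y hxy
    by_contra hne
    exact (hD (x, y)).2 hne (hS2 (congrArg Subtype.val hxy))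
  · intro x y
    constructor
    · intro hMadj
      have hE := (hD (x, y)).1.2 hMadj
      have hsadj := (hS3 _ _).1 hE
      exact ⟨fun hc => hsadj.1 (congrArg Subtype.val hc), hsadj.2⟩
    · rintro ⟨h1, h2⟩
      have hsadj : SAdj (tupN M r (cmapN M r x : N)) (tupN M r (cmapN M r y)) :=
        ⟨fun hc => h1 (Subtype.ext hc), h2⟩
      exact (hD (x, y)).1.1 ((hS3 _ _).2 hsadj)
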